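/- There exists a finite deterministic goal-conditioned MDP and a policy that is optimal for all start-goal pairs at distance at most H but suboptimal for some pair at distance H+1; hence optimality on short horizons does not imply optimality on longer horizons without planning invariance. -/

import Mathlib

/-- Reachability in exactly `n` steps in a deterministic MDP. -/
def ReachIn {S A : Type*} (f : S → A → S) : ℕ → S → S → Prop
  | 0, s, g => s = g
  | n + 1, s, g => ∃ a, ReachIn f n (f s a) g

open Fin.NatCast Fin.CommRing

/-- Dynamics: `true` = stay, `false` = step forward on the cycle. -/
def Fdyn (H : ℕ) : Fin (H + 2) → Bool → Fin (H + 2) :=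
  fun s a => if a then s else s + 1

/-- The distinguished goal state `H+1`. -/
def lastS (H : ℕ) : Fin (H + 2) := ⟨H + 1, by omega⟩

/-- The flawed policy: stay at `0` when the goal is `lastS H`, otherwise forward. -/
def Pol (H : ℕ) : Fin (H + 2) → Fin (H + 2) → Bool :=
  fun z g => decide (z = 0 ∧ g = lastS H)

lemma iter_fwd (H k : ℕ) (x : Fin (H + 2)) :
    (fun z : Fin (H + 2) => z + 1)^[k] x = x + (k : Fin (H + 2)) := by
  induction k generalizing x with
  | zero => simp
  | succ n ih =>
      rw [Function.iterate_succ_apply, ih]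
      push_cast
      ring

lemma reach_fwd (H k : ℕ) (x : Fin (H + 2)) :
    ReachIn (Fdyn H) k x (x + (k : Fin (H + 2))) := by
  induction k generalizing x with
  | zero => simp [ReachIn]
  | succ n ih =>
      refine ⟨false, ?_⟩
      have := ih (x + 1)
      have hc : ((n + 1 : ℕ) : Fin (H + 2)) = (n : Fin (H + 2)) + 1 := by push_cast; ring
      rw [hc]
      have : x + 1 + (n : Fin (H + 2)) = x + ((n : Fin (H + 2)) + 1) := by ring
      simpa [Fdyn, this] using ih (x + 1)

lemma reach_lower (H : ℕ) : ∀ n (x y : Fin (H + 2)), ReachIn (Fdyn H) n x y → (y - x).val ≤ n := by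
  intro n
  induction n with
  | zero =>
      intro x y h
      cases h
      simp
  | succ n ih =>
      intro x y h
      obtain ⟨a, ha⟩ := h
      cases a with
      | true =>
          have := ih x y (by simpa [Fdyn] using ha)
          omega
      | false =>
          have h1 : (y - (x + 1)).val ≤ n := ih (x + 1) y (by simpa [Fdyn] using ha)
          have h2 : y - x = (y - (x + 1)) + 1 := by ring
          have h3 : ((y - (x + 1)) + 1).val ≤ (y - (x + 1)).val + 1 := by
            rw [Fin.add_def]
            exact le_trans (Nat.mod_le _ _) (by simp [Fin.val_one])
          rw [h2]
          omega

lemma iter_pol (H : ℕ) : ∀ (k : ℕ) (x : Fin (H + 2)), x ≠ 0 → x.val + k ≤ H + 1 →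
    (fun z => Fdyn H z (Pol H z (lastS H)))^[k] x = x + (k : Fin (H + 2)) := by
  intro k
  induction k with
  | zero => intro x _ _; simp
  | succ n ih =>
      intro x hx hle
      have hpol : Pol H x (lastS H) = false := by
        simp [Pol, hx]
      rw [Function.iterate_succ_apply]
      have hstep : Fdyn H x (Pol H x (lastS H)) = x + 1 := by
        simp [Fdyn, hpol]
      rw [hstep]
      have hxv : x.val + 1 < H + 2 := by omega
      have hval : (x + 1).val = x.val + 1 := by
        rw [Fin.add_def]
        simp [Fin.val_one, Nat.mod_eq_of_lt hxv]
      have hne : x + 1 ≠ 0 := by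
        intro h
        rw [h] at hval
        simp at hval
      have := ih (x + 1) hne (by omega)
      rw [this]
      have hc : ((n + 1 : ℕ) : Fin (H + 2)) = (n : Fin (H + 2)) + 1 := by push_cast; ring
      rw [hc]; ring

theorem horizon_generalization_nontrivial (H : ℕ) :
    ∃ (S A : Type) (_ : Fintype S) (_ : Fintype A) (hA : 2 ≤ Nat.card A)
      (f : S → A → S) (d : S → S → ℕ)
      (_ : ∀ s g, IsLeast {n : ℕ | ReachIn f n s g} (d s g))
      (π : S → S → A) (s g' : S),
      (∀ x y : S, d x y ≤ H → (fun z => f z (π z y))^[d x y] x = y) ∧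
        d s g' = H + 1 ∧
        ¬ (fun z => f z (π z g'))^[d s g'] s = g' := by
  refine ⟨Fin (H + 2), Bool, inferInstance, inferInstance, by simp, Fdyn H,
    fun s g => (g - s).val, ?_, Pol H, 0, lastS H, ?_, ?_, ?_⟩
  · intro s g
    constructor
    · have := reach_fwd H ((g - s).val) s
      simpa [Fin.cast_val_eq_self] using this
    · intro n hn
      exact reach_lower H n s g hn
  · -- optimality at distance ≤ H
    intro x y hd
    by_cases hy : y = lastS H
    · subst hy
      have hx0 : x ≠ 0 := by
        intro h
        subst h
        have : ((lastS H : Fin (H + 2)) - 0).val = H + 1 := by rw [sub_zero]; rfl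
        simp only [this] at hd
        omega
      -- show x.val + d = H + 1
      set d := ((lastS H : Fin (H+2)) - x).val with hddef
      have hsum : x + (d : Fin (H + 2)) = lastS H := by
        rw [hddef, Fin.cast_val_eq_self]
        ring
      have hmod : (x.val + d) % (H + 2) = H + 1 := by
        have h0 := congrArg Fin.val hsum
        simp only [Fin.add_def, Fin.val_natCast, Nat.add_mod_mod, lastS] at h0
        exact h0
      have hxlt : x.val < H + 2 := x.isLt
      have hdle : d ≤ H := hd
      have hle : x.val + d ≤ H + 1 := by
        rcases Nat.lt_or_ge (x.val + d) (H + 2) with h | h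
        · omega
        · have hlt : x.val + d - (H + 2) < H + 2 := by omega
          have heq : (x.val + d) % (H + 2) = x.val + d - (H + 2) := by
            rw [Nat.mod_eq_sub_mod h, Nat.mod_eq_of_lt hlt]
          omega
      have := iter_pol H d x hx0 hle
      rw [this, hddef, Fin.cast_val_eq_self]
      ring
    · -- goal is not lastS H: policy is always forward
      have hfun : (fun z => Fdyn H z (Pol H z y)) = fun z : Fin (H + 2) => z + 1 := by
        funext z
        simp [Fdyn, Pol, hy]
      rw [hfun, iter_fwd, Fin.cast_val_eq_self]
      ring
  · show ((lastS H : Fin (H + 2)) - 0).val = H + 1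
    rw [sub_zero]
    rfl
  · have hfix : (fun z => Fdyn H z (Pol H z (lastS H))) (0 : Fin (H + 2)) = 0 := by
      simp [Fdyn, Pol]
    intro h
    rw [Function.iterate_fixed (f := fun z => Fdyn H z (Pol H z (lastS H))) hfix] at h
    have := congrArg Fin.val h
    simp [lastS] at this
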